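/- Let K be a field, a, b, c ∈ K parameters, and (x, y, z) ∈ K³ with z ≠ 0, z + b ≠ 0 and az + c ≠ 0. Define x₃ = (ayz² + cyz + (1 − a)z + b − c)/(z(z + b)) and y₃ = (xz² + bxz + (a − 1)z + c − b)/(z(az + c)). Then x₃ + y₃ + z − x₃·y₃·z = x + y + z − xyz and z(x₃ + a·y₃) + b·x₃ + c·y₃ = z(x + ay) + bx + cy. -/

import Mathlib

/-- The map `R₃` of the polynomial-invariants example preserves both
invariants `I = x + y + z - xyz` and `J = z(x + ay) + bx + cy`. -/
theorem stmt_4 {K : Type*} [Field K] (a b c x y z : K)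
    (h0 : z ≠ 0) (h1 : z + b ≠ 0) (h2 : a * z + c ≠ 0) :
    let x3 := (a * y * z ^ 2 + c * y * z + (1 - a) * z + b - c) / (z * (z + b))
    let y3 := (x * z ^ 2 + b * x * z + (a - 1) * z + c - b) / (z * (a * z + c))
    x3 + y3 + z - x3 * y3 * z = x + y + z - x * y * z ∧
    z * (x3 + a * y3) + b * x3 + c * y3 = z * (x + a * y) + b * x + c * y := by
  have hzb : z * (z + b) ≠ 0 := mul_ne_zero h0 h1
  have hzc : z * (a * z + c) ≠ 0 := mul_ne_zero h0 h2
  have h2' : z * a + c ≠ 0 := by rwa [mul_comm]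
  constructor <;> field_simp <;> ring
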